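/- Convergence in measure of Monge maps from weak convergence of plans: Let X be a Polish space, μₙ, ν_n Borel probability measures on X for n ≥ 0 with μₙ → μ₀ in total variation. Let Tₙ: X → X be Borel maps such that the measures σₙ, defined as the pushforwards of μₙ under x ↦ (x, Tₙ(x)), converge weakly to σ₀. Then Tₙ → T₀ in measure with respect to μ₀, i.e., for every δ > 0, μ₀(x : d(Tₙ(x), T₀(x)) ≥ δ) → 0. -/

import Mathlib

open MeasureTheory Filter Set
open scoped ENNReal Topology

lemma aux_tight {X : Type*} [TopologicalSpace X] [PolishSpace X] [m : MeasurableSpace X]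
    [OpensMeasurableSpace X] (μ : Measure X) [IsFiniteMeasure μ] {ε : ℝ≥0∞} (hε : ε ≠ 0) :
    ∃ C : Set X, IsCompact C ∧ μ Cᶜ ≤ ε := by
  letI := TopologicalSpace.upgradeIsCompletelyMetrizable X
  rcases isEmpty_or_nonempty X with hX | hX
  · exact ⟨∅, isCompact_empty, by simp [eq_empty_of_isEmpty (∅ᶜ : Set X)]⟩
  obtain ⟨u, hu⟩ := TopologicalSpace.exists_dense_seq X
  obtain ⟨δ, hδpos, hδsum⟩ := ENNReal.exists_pos_sum_of_countable hε ℕ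
  have key : ∀ k : ℕ, ∃ N : ℕ,
      μ (⋃ i ∈ Finset.range (N+1), Metric.closedBall (u i) (1/(k+1)))ᶜ ≤ δ k := by
    intro k
    set S : ℕ → Set X := fun N =>
      (⋃ i ∈ Finset.range (N+1), Metric.closedBall (u i) (1/(k+1)))ᶜ with hS
    have hmeas : ∀ N, NullMeasurableSet (S N) μ := fun N =>
      (MeasurableSet.biUnion (Finset.range (N+1)).countable_toSet
        (fun i _ => measurableSet_closedBall)).compl.nullMeasurableSet
    have hanti : Antitone S := by
      intro a b hab
      exact compl_subset_compl.2 (biUnion_subset_biUnion_left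
        (by exact_mod_cast Finset.range_subset_range.2 (by omega)))
    have hiInter : ⋂ N, S N = ∅ := by
      simp only [hS, ← compl_iUnion]
      rw [compl_eq_comm, compl_empty]
      apply (eq_univ_of_forall ?_).symm
      intro x
      have hpos : (0:ℝ) < 1/(k+1) := by positivity
      obtain ⟨i, hi⟩ := Metric.denseRange_iff.1 hu x (1/(k+1)) hpos
      exact mem_iUnion.2 ⟨i, mem_iUnion.2 ⟨i, mem_iUnion.2
        ⟨Finset.self_mem_range_succ i, by
          simpa [Metric.mem_closedBall, dist_comm] using hi.le⟩⟩⟩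
    have := tendsto_measure_iInter_atTop hmeas hanti ⟨0, measure_ne_top μ _⟩
    rw [hiInter] at this
    simp only [measure_empty] at this
    have hev := this.eventually_le_const (show (0:ℝ≥0∞) < δ k by exact_mod_cast hδpos k)
    obtain ⟨N, hN⟩ := hev.exists
    exact ⟨N, hN⟩
  choose N hN using key
  set B : ℕ → Set X := fun k => ⋃ i ∈ Finset.range (N k + 1),
    Metric.closedBall (u i) (1/(k+1)) with hB
  refine ⟨⋂ k, B k, ?_, ?_⟩
  · have hclosed : IsClosed (⋂ k, B k) :=
      isClosed_iInter (fun k => isClosed_biUnion_finset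
        (fun i _ => Metric.isClosed_closedBall))
    refine TotallyBounded.isCompact_of_isClosed ?_ hclosed
    rw [Metric.totallyBounded_iff]
    intro r hr
    obtain ⟨k, hk⟩ := exists_nat_one_div_lt hr
    refine ⟨u '' (Finset.range (N k + 1)), (Finset.range (N k + 1)).finite_toSet.image u, ?_⟩
    intro x hx
    have hx' : x ∈ B k := mem_iInter.1 hx k
    simp only [hB, mem_iUnion] at hx'
    obtain ⟨i, hi, hxi⟩ := hx'
    refine mem_biUnion (mem_image_of_mem u hi) ?_
    exact Metric.mem_ball.2 (lt_of_le_of_lt (Metric.mem_closedBall.1 hxi) hk)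
  · rw [compl_iInter]
    refine le_trans (measure_iUnion_le _) (le_trans ?_ hδsum.le)
    exact ENNReal.tsum_le_tsum (fun k => hN k)

lemma aux_inner {X : Type*} [MetricSpace X] [PolishSpace X] [m : MeasurableSpace X]
    [BorelSpace X] (μ : Measure X) [IsFiniteMeasure μ] {A : Set X} (hA : MeasurableSet A)
    {ε : ℝ≥0∞} (hε : ε ≠ 0) :
    ∃ K, K ⊆ A ∧ IsCompact K ∧ μ (A \ K) ≤ ε := by
  have hε2 : ε / 2 ≠ 0 := by simp [ENNReal.div_eq_zero_iff, hε]
  obtain ⟨F, hFA, hFc, hF⟩ := hA.exists_isClosed_diff_lt (measure_ne_top μ A) hε2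
  obtain ⟨C, hCc, hC⟩ := aux_tight μ hε2
  refine ⟨F ∩ C, (inter_subset_left).trans hFA, hCc.inter_left hFc, ?_⟩
  have : A \ (F ∩ C) ⊆ (A \ F) ∪ Cᶜ := by
    intro x hx
    rcases hx with ⟨hxA, hx⟩
    by_cases hxF : x ∈ F
    · exact Or.inr (fun hxC => hx ⟨hxF, hxC⟩)
    · exact Or.inl ⟨hxA, hxF⟩
  calc μ (A \ (F ∩ C)) ≤ μ (A \ F) + μ Cᶜ := le_trans (measure_mono this) (measure_union_le _ _)
    _ ≤ ε / 2 + ε / 2 := add_le_add hF.le hC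
    _ = ε := ENNReal.add_halves ε

lemma aux_simple {X : Type*} [MetricSpace X] [PolishSpace X] [m : MeasurableSpace X]
    [BorelSpace X] (μ : Measure X) [IsFiniteMeasure μ] (s : SimpleFunc X X)
    {ε : ℝ≥0∞} (hε : ε ≠ 0) :
    ∃ K : Set X, IsCompact K ∧ μ Kᶜ ≤ ε ∧ ContinuousOn s K := by
  set c := (s.range.card : ℝ≥0∞) + 1 with hc
  have hδ : ε / c ≠ 0 := by
    simp [ENNReal.div_eq_zero_iff, hε, hc,
      ENNReal.add_ne_top.2 ⟨ENNReal.natCast_ne_top _, ENNReal.one_ne_top⟩]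
  choose K hKsub hKcomp hKmeas using
    fun y : X => aux_inner μ (s.measurableSet_fiber y) hδ
  refine ⟨⋃ y ∈ s.range, K y, ?_, ?_, ?_⟩
  · exact s.range.isCompact_biUnion (fun y _ => hKcomp y)
  · have hcover : (⋃ y ∈ s.range, K y)ᶜ ⊆ ⋃ y ∈ s.range, (s ⁻¹' {y} \ K y) := by
      intro x hx
      have hxy : s x ∈ s.range := s.mem_range_self x
      refine mem_biUnion hxy ⟨rfl, fun hxK => hx (mem_biUnion hxy hxK)⟩
    calc μ (⋃ y ∈ s.range, K y)ᶜ ≤ ∑ y ∈ s.range, μ (s ⁻¹' {y} \ K y) :=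
          le_trans (measure_mono hcover) (measure_biUnion_finset_le _ _)
      _ ≤ ∑ _y ∈ s.range, ε / c := Finset.sum_le_sum (fun y _ => hKmeas y)
      _ = s.range.card * (ε / c) := by rw [Finset.sum_const, nsmul_eq_mul]
      _ ≤ c * (ε / c) := by
          gcongr
          exact le_add_of_nonneg_right zero_le_one
      _ ≤ ε := ENNReal.mul_div_le
  · classical
    intro x hx
    obtain ⟨y₀, hy₀, hxK⟩ := mem_iUnion₂.1 hx
    have hsx : s x = y₀ := hKsub y₀ hxK
    set U := (⋃ y ∈ s.range.erase y₀, K y)ᶜ with hU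
    have hUopen : IsOpen U := by
      rw [hU, isOpen_compl_iff]
      exact isClosed_biUnion_finset (fun y _ => (hKcomp y).isClosed)
    have hxU : x ∈ U := by
      rw [hU, mem_compl_iff, mem_iUnion₂]
      rintro ⟨y, hy, hxy⟩
      have h1 : s x = y := hKsub y hxy
      exact (Finset.mem_erase.1 hy).1 (h1.symm.trans hsx)
    have heq : ∀ z ∈ (⋃ y ∈ s.range, K y) ∩ U, s z = y₀ := by
      rintro z ⟨hz1, hz2⟩
      obtain ⟨y, hy, hzy⟩ := mem_iUnion₂.1 hz1
      by_cases hyy : y = y₀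
      · have h1 : s z = y := hKsub y hzy
        exact h1.trans hyy
      · exact absurd (mem_biUnion (Finset.mem_erase.2 ⟨hyy, hy⟩) hzy) hz2
    have : ContinuousWithinAt (fun _ => y₀) (⋃ y ∈ s.range, K y) x := continuousWithinAt_const
    refine this.congr_of_eventuallyEq ?_ (by simp [hsx])
    filter_upwards [self_mem_nhdsWithin, mem_nhdsWithin_of_mem_nhds (hUopen.mem_nhds hxU)]
      with z hz1 hz2
    exact heq z ⟨hz1, hz2⟩

lemma aux_luzin {X : Type*} [MetricSpace X] [PolishSpace X] [m : MeasurableSpace X]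
    [BorelSpace X] (μ : Measure X) [IsFiniteMeasure μ] {f : X → X} (hf : Measurable f)
    {ε : ℝ≥0∞} (hε : ε ≠ 0) :
    ∃ K : Set X, IsCompact K ∧ μ Kᶜ ≤ ε ∧ ContinuousOn f K := by
  have hε2 : ε / 2 ≠ 0 := by simp [ENNReal.div_eq_zero_iff, hε]
  have hε4 : ε / 2 / 2 ≠ 0 := by simp [ENNReal.div_eq_zero_iff, hε]
  obtain ⟨δ, hδpos, hδsum⟩ := ENNReal.exists_pos_sum_of_countable hε2 ℕ
  have hsm := hf.stronglyMeasurable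
  set g : ℕ → SimpleFunc X X := hsm.approx with hg
  have htend : ∀ x, Tendsto (fun n => g n x) atTop (𝓝 (f x)) := hsm.tendsto_approx
  -- Egorov
  set ε₄ := min (ε / 2 / 2) 1 with hε₄def
  have hε₄ne : ε₄ ≠ 0 := by
    simp only [hε₄def, ne_eq, min_eq_iff, not_or]
    exact ⟨fun h => hε4 h.1, fun h => one_ne_zero h.1⟩
  have hε₄top : ε₄ ≠ ∞ := ne_top_of_le_ne_top ENNReal.one_ne_top (min_le_right _ _)
  have hε₄pos : 0 < ε₄.toReal := ENNReal.toReal_pos hε₄ne hε₄top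
  obtain ⟨t, htm, htμ, htu⟩ := tendstoUniformlyOn_of_ae_tendsto' (μ := μ)
    (fun n => (g n).stronglyMeasurable) hsm (Eventually.of_forall htend) hε₄pos
  have htμ' : μ t ≤ ε / 2 / 2 := by
    rw [ENNReal.ofReal_toReal hε₄top] at htμ
    exact htμ.trans (min_le_left _ _)
  obtain ⟨K', hK't, hK'comp, hK'μ⟩ := aux_inner μ htm.compl hε4
  have hδne : ∀ n, (δ n : ℝ≥0∞) ≠ 0 := fun n => by
    simpa using (hδpos n).ne'
  choose C hCcomp hCμ hCcont using fun n => aux_simple μ (g n) (hδne n)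
  refine ⟨K' ∩ ⋂ n, C n, ?_, ?_, ?_⟩
  · exact hK'comp.inter_right (isClosed_iInter (fun n => (hCcomp n).isClosed))
  · have hsub : (K' ∩ ⋂ n, C n)ᶜ ⊆ (t ∪ (tᶜ \ K')) ∪ ⋃ n, (C n)ᶜ := by
      intro x hx
      rw [mem_compl_iff, mem_inter_iff, not_and_or] at hx
      rcases hx with hx | hx
      · left
        by_cases hxt : x ∈ t
        · exact Or.inl hxt
        · exact Or.inr ⟨hxt, hx⟩
      · right
        rw [mem_iInter, not_forall] at hx
        obtain ⟨n, hn⟩ := hx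
        exact mem_iUnion.2 ⟨n, hn⟩
    calc μ (K' ∩ ⋂ n, C n)ᶜ ≤ μ (t ∪ (tᶜ \ K')) + μ (⋃ n, (C n)ᶜ) :=
          le_trans (measure_mono hsub) (measure_union_le _ _)
      _ ≤ (μ t + μ (tᶜ \ K')) + ∑' n, μ (C n)ᶜ :=
          add_le_add (measure_union_le _ _) (measure_iUnion_le _)
      _ ≤ (ε / 2 / 2 + ε / 2 / 2) + ε / 2 := by
          refine add_le_add (add_le_add htμ' hK'μ) ?_
          exact le_trans (ENNReal.tsum_le_tsum (fun n => hCμ n)) hδsum.le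
      _ = ε := by rw [ENNReal.add_halves, ENNReal.add_halves]
  · have hKt : (K' ∩ ⋂ n, C n) ⊆ tᶜ := (inter_subset_left).trans hK't
    refine TendstoUniformlyOn.continuousOn (htu.mono hKt) ?_
    exact Eventually.frequently (Eventually.of_forall (fun n =>
      (hCcont n).mono ((inter_subset_right).trans (iInter_subset _ n))))

theorem stmt16 {X : Type*}
    [MetricSpace X] [PolishSpace X] [MeasurableSpace X] [BorelSpace X]
    (μ : ℕ → Measure X) [∀ n, IsProbabilityMeasure (μ n)]
    -- total variation convergence μₙ → μ₀
    (hTV : Tendsto (fun n => ⨆ s : {s : Set X // MeasurableSet s},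
        |((μ n) s.1).toReal - ((μ 0) s.1).toReal|) atTop (𝓝 0))
    (T : ℕ → X → X) (hT : ∀ n, Measurable (T n))
    -- weak convergence of the plans σₙ = (id, Tₙ)_*μₙ to σ₀ = (id, T₀)_*μ₀
    (hweak : ∀ f : BoundedContinuousFunction (X × X) ℝ,
      Tendsto (fun n => ∫ p, f p ∂((μ n).map (fun x => (x, T n x))))
        atTop (𝓝 (∫ p, f p ∂((μ 0).map (fun x => (x, T 0 x)))))) :
    ∀ δ : ℝ, 0 < δ →
      Tendsto (fun n => (μ 0) {x | δ ≤ dist (T n x) (T 0 x)}) atTop (𝓝 0) := by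
  intro δ hδ
  -- the plans as probability measures
  have hmap : ∀ n, Measurable (fun x => (x, T n x)) := fun n => measurable_id.prodMk (hT n)
  have hPinst : ∀ n, IsProbabilityMeasure ((μ n).map (fun x => (x, T n x))) :=
    fun n => Measure.isProbabilityMeasure_map (hmap n).aemeasurable
  set P : ℕ → ProbabilityMeasure (X × X) :=
    fun n => ⟨(μ n).map (fun x => (x, T n x)), hPinst n⟩ with hP
  have hPtend : Tendsto P atTop (𝓝 (P 0)) :=
    ProbabilityMeasure.tendsto_iff_forall_integral_tendsto.2 hweak
  -- measurability of the bad sets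
  have hSmeas : ∀ n, MeasurableSet {x | δ ≤ dist (T n x) (T 0 x)} := fun n =>
    measurableSet_le measurable_const ((hT n).dist (hT 0))
  -- reduce to real-valued convergence
  rw [← ENNReal.tendsto_toReal_iff (fun n => measure_ne_top _ _) ENNReal.zero_ne_top,
    ENNReal.toReal_zero]
  rw [tendsto_order]
  constructor
  · intro a ha
    filter_upwards with n
    exact lt_of_lt_of_le ha ENNReal.toReal_nonneg
  intro a ha
  set ε := a / 4 with hε
  have hεpos : 0 < ε := by positivity
  -- Luzin
  obtain ⟨K, hKcomp, hKμ, hKcont⟩ := aux_luzin (μ 0) (hT 0)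
    (ε := ENNReal.ofReal ε) (by simp [ENNReal.ofReal_eq_zero, not_le, hεpos])
  -- the closed set A
  set A : Set (X × X) := {p : X × X | p.1 ∈ K ∧ δ ≤ dist p.2 (T 0 p.1)} with hA
  have hAclosed : IsClosed A := by
    have h1 : ContinuousOn (fun p : X × X => dist p.2 (T 0 p.1)) (K ×ˢ univ) := by
      have h0 : ContinuousOn (fun p : X × X => T 0 p.1) (K ×ˢ univ) :=
        hKcont.comp continuous_fst.continuousOn (fun p hp => hp.1)
      exact continuous_dist.comp_continuousOn ((continuous_snd.continuousOn).prodMk h0)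
    have h2 := h1.preimage_isClosed_of_isClosed (hKcomp.isClosed.prod isClosed_univ) (isClosed_Ici (a := δ))
    convert h2 using 1
    ext p
    simp [hA, Set.mem_prod, and_comm]
  have hAmeas : MeasurableSet A := hAclosed.measurableSet
  -- σ₀ A = 0
  have hA0 : (μ 0).map (fun x => (x, T 0 x)) A = 0 := by
    rw [Measure.map_apply (hmap 0) hAmeas]
    convert measure_empty (μ := μ 0)
    ext x
    simp only [hA, mem_preimage, mem_setOf_eq, dist_self, mem_empty_iff_false, iff_false, not_and,
      not_le]
    exact fun _ => hδ
  -- portmanteau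
  have hlimsup := ProbabilityMeasure.limsup_measure_closed_le_of_tendsto hPtend hAclosed
  have hlim0 : Tendsto (fun n => (μ n).map (fun x => (x, T n x)) A) atTop (𝓝 0) := by
    have h1 : limsup (fun n => (μ n).map (fun x => (x, T n x)) A) atTop = 0 := by
      refine le_antisymm ?_ (by simp)
      calc limsup (fun n => (μ n).map (fun x => (x, T n x)) A) atTop
          ≤ (P 0 : Measure (X × X)) A := hlimsup
        _ = 0 := hA0
    have h2 : liminf (fun n => (μ n).map (fun x => (x, T n x)) A) atTop = 0 := by
      refine le_antisymm (h1 ▸ liminf_le_limsup) (by simp)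
    exact tendsto_of_liminf_eq_limsup h2 h1
  -- total variation bound
  have hDbound : ∀ n (B : Set X), MeasurableSet B →
      |((μ n) B).toReal - ((μ 0) B).toReal| ≤ ⨆ s : {s : Set X // MeasurableSet s},
        |((μ n) s.1).toReal - ((μ 0) s.1).toReal| := by
    intro n B hB
    have hbdd : BddAbove (Set.range (fun s : {s : Set X // MeasurableSet s} =>
        |((μ n) s.1).toReal - ((μ 0) s.1).toReal|)) := by
      refine ⟨2, ?_⟩
      rintro x ⟨⟨s, hs⟩, rfl⟩
      simp only
      have h1 : ((μ n) s).toReal ≤ 1 := by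
        rw [← ENNReal.toReal_one]
        exact ENNReal.toReal_mono ENNReal.one_ne_top prob_le_one
      have h2 : ((μ 0) s).toReal ≤ 1 := by
        rw [← ENNReal.toReal_one]
        exact ENNReal.toReal_mono ENNReal.one_ne_top prob_le_one
      have h3 : (0:ℝ) ≤ ((μ n) s).toReal := ENNReal.toReal_nonneg
      have h4 : (0:ℝ) ≤ ((μ 0) s).toReal := ENNReal.toReal_nonneg
      rw [abs_sub_le_iff]
      constructor <;> linarith
    exact le_ciSup (f := fun s : {s : Set X // MeasurableSet s} =>
      |((μ n) s.1).toReal - ((μ 0) s.1).toReal|) hbdd ⟨B, hB⟩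
  have hDev := hTV.eventually_lt_const hεpos
  have hofReal : (0:ℝ≥0∞) < ENNReal.ofReal ε := by
    simp [ENNReal.ofReal_pos, hεpos]
  have hAev : ∀ᶠ n in atTop, (μ n).map (fun x => (x, T n x)) A ≤ ENNReal.ofReal ε :=
    hlim0.eventually_le_const hofReal
  filter_upwards [hDev, hAev] with n hDn hAn
  set S : Set X := {x | δ ≤ dist (T n x) (T 0 x)} with hS
  have hpre : (fun x => (x, T n x)) ⁻¹' A = S ∩ K := by
    ext x
    simp only [hA, hS, mem_preimage, mem_setOf_eq, mem_inter_iff, and_comm]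
  have hSKmeas : MeasurableSet (S ∩ K) := (hSmeas n).inter hKcomp.isClosed.measurableSet
  have hμnpre : (μ n) (S ∩ K) ≤ ENNReal.ofReal ε := by
    rw [← hpre, ← Measure.map_apply (hmap n) hAmeas]
    exact hAn
  have b1 : ((μ 0) (S ∩ K)).toReal ≤ ((μ n) (S ∩ K)).toReal +
      ⨆ s : {s : Set X // MeasurableSet s}, |((μ n) s.1).toReal - ((μ 0) s.1).toReal| := by
    have h := hDbound n (S ∩ K) hSKmeas
    have h2 := (abs_le.1 h).1
    linarith
  have b2 : ((μ n) (S ∩ K)).toReal ≤ ε := ENNReal.toReal_le_of_le_ofReal hεpos.le hμnpre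
  have b3 : ((μ 0) Kᶜ).toReal ≤ ε := ENNReal.toReal_le_of_le_ofReal hεpos.le hKμ
  have b4 : ((μ 0) S).toReal ≤ ((μ 0) (S ∩ K)).toReal + ((μ 0) Kᶜ).toReal := by
    have hsub : S ⊆ (S ∩ K) ∪ Kᶜ := by
      intro x hx
      by_cases hxK : x ∈ K
      · exact Or.inl ⟨hx, hxK⟩
      · exact Or.inr hxK
    calc ((μ 0) S).toReal ≤ (((μ 0) (S ∩ K)) + (μ 0) Kᶜ).toReal := by
          refine ENNReal.toReal_mono ?_ (le_trans (measure_mono hsub) (measure_union_le _ _))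
          exact ENNReal.add_ne_top.2 ⟨measure_ne_top _ _, measure_ne_top _ _⟩
      _ = ((μ 0) (S ∩ K)).toReal + ((μ 0) Kᶜ).toReal :=
          ENNReal.toReal_add (measure_ne_top _ _) (measure_ne_top _ _)
  have : ((μ 0) S).toReal < 3 * ε := by linarith
  rw [hε] at this
  linarith
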